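/- Let K be a compact Hausdorff space, let μ be a finite signed regular Borel measure on K with ‖μ‖ = |μ|(K) = 1, and let h : K → ℝ be a Borel function with |h(x)| = 1 for all x ∈ K such that dμ = h d|μ| (i.e. μ(B) = ∫_B h d|μ| for every Borel set B). Assume that (x_n)_{n≥1} is a sequence in K which is uniformly distributed with respect to |μ| (i.e. (1/N)·Σ_{k=1}^N g(x_k) → ∫_K g d|μ| for every continuous g : K → ℝ) and that h is |μ|-Riemann integrable, i.e. the set of discontinuity points of h has |μ|-measure zero. Then, setting ε_n = h(x_n), for every continuous function f : K → ℝ one has (1/N)·Σ_{k=1}^N ε_k·f(x_k) → ∫_K f dμ as N → ∞. -/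

import Mathlib

open Filter Finset MeasureTheory Set

/-- A function with everywhere small oscillation on a compact Hausdorff space can be
uniformly approximated by a continuous function. -/
theorem stmt14_approx_of_osc {K : Type*} [TopologicalSpace K] [CompactSpace K] [T2Space K]
    (φ : K → ℝ) {δ : ℝ}
    (hyp : ∀ x : K, ∃ U : Set K, IsOpen U ∧ x ∈ U ∧ ∀ y ∈ U, ∀ z ∈ U, |φ y - φ z| ≤ δ) :
    ∃ g : K → ℝ, Continuous g ∧ ∀ x, |g x - φ x| ≤ δ := by
  choose U hUo hxU hUd using hyp
  obtain ⟨f, hf⟩ := PartitionOfUnity.exists_isSubordinate (s := (Set.univ : Set K))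
    isClosed_univ U hUo (fun x _ => Set.mem_iUnion.2 ⟨x, hxU x⟩)
  refine ⟨fun x => ∑ᶠ i, f i x • φ i,
    f.continuous_finsum_smul (fun i x _ => continuousAt_const), fun x => ?_⟩
  have hsum : ∑ i ∈ f.finsupport x, f i x = 1 := f.sum_finsupport (Set.mem_univ x)
  have h1 : (∑ᶠ i, f i x • φ i) = ∑ i ∈ f.finsupport x, f i x • φ i :=
    (f.sum_finsupport_smul_eq_finsum (x₀ := x) (fun i _ => φ i)).symm
  simp only []
  rw [h1]
  have hφx : φ x = ∑ i ∈ f.finsupport x, f i x * φ x := by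
    rw [← Finset.sum_mul, hsum, one_mul]
  calc |(∑ i ∈ f.finsupport x, f i x • φ i) - φ x|
      = |∑ i ∈ f.finsupport x, (f i x * φ i - f i x * φ x)| := by
        rw [Finset.sum_sub_distrib, ← hφx]; rfl
    _ ≤ ∑ i ∈ f.finsupport x, |f i x * (φ i - φ x)| := by
        refine le_trans (le_of_eq ?_) (Finset.abs_sum_le_sum_abs _ _)
        congr 1; apply Finset.sum_congr rfl; intro i _; rw [mul_sub]
    _ ≤ ∑ i ∈ f.finsupport x, f i x * δ := by
        apply Finset.sum_le_sum
        intro i hi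
        rw [abs_mul, abs_of_nonneg (f.nonneg i x)]
        have hxi : x ∈ U i := by
          apply hf i
          apply subset_tsupport
          exact (f.mem_finsupport x).1 hi
        exact mul_le_mul_of_nonneg_left (hUd i i (hxU i) x hxi) (f.nonneg i x)
    _ = δ := by rw [← Finset.sum_mul, hsum, one_mul]

/-- Continuous approximation from above of a bounded measurable a.e.-continuous function. -/
theorem stmt14_exists_cont_ge {K : Type*} [TopologicalSpace K] [CompactSpace K] [T2Space K]
    [MeasurableSpace K] [BorelSpace K]
    (ν : Measure K) [IsFiniteMeasure ν] [ν.OuterRegular]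
    (φ : K → ℝ) (hφm : Measurable φ) {M : ℝ} (hM0 : 0 ≤ M) (hM : ∀ x, |φ x| ≤ M)
    (hnull : ν {a | ¬ ContinuousAt φ a} = 0) {ε : ℝ} (hε : 0 < ε) :
    ∃ g : K → ℝ, Continuous g ∧ (∀ x, φ x ≤ g x) ∧
      ∫ a, g a ∂ν ≤ (∫ a, φ a ∂ν) + ε := by
  obtain ⟨T, hT, hT0⟩ : ∃ T : ℝ, (ν Set.univ).toReal = T ∧ 0 ≤ T :=
    ⟨(ν Set.univ).toReal, rfl, ENNReal.toReal_nonneg⟩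
  obtain ⟨δ, hδ0, hδkey⟩ : ∃ δ : ℝ, 0 < δ ∧ δ * (8 * (T + 1)) = ε :=
    ⟨ε / (8 * (T + 1)), by positivity, div_mul_cancel₀ _ (by positivity)⟩
  obtain ⟨ε', hε'0, hε'key⟩ : ∃ e : ℝ, 0 < e ∧ e * (4 * (M + 1)) = ε :=
    ⟨ε / (4 * (M + 1)), by positivity, div_mul_cancel₀ _ (by positivity)⟩
  -- the "good" open set where oscillation is < δ
  have hGopen : IsOpen {x : K | ∃ W : Set K, IsOpen W ∧ x ∈ W ∧
      ∀ y ∈ W, ∀ z ∈ W, |φ y - φ z| < δ} := by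
    refine isOpen_iff_forall_mem_open.2 fun x hx => ?_
    obtain ⟨W, hWo, hxW, hWd⟩ := hx
    exact ⟨W, fun y hy => ⟨W, hWo, hy, hWd⟩, hWo, hxW⟩
  set G : Set K := {x : K | ∃ W : Set K, IsOpen W ∧ x ∈ W ∧
      ∀ y ∈ W, ∀ z ∈ W, |φ y - φ z| < δ}
  have hFclosed : IsClosed Gᶜ := hGopen.isClosed_compl
  have hFsub : Gᶜ ⊆ {a | ¬ ContinuousAt φ a} := by
    intro a ha
    simp only [Set.mem_setOf_eq]
    intro hc
    apply ha
    have hball : φ ⁻¹' Metric.ball (φ a) (δ / 2) ∈ nhds a :=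
      hc (Metric.ball_mem_nhds _ (by positivity))
    obtain ⟨W, hWsub, hWo, haW⟩ := mem_nhds_iff.1 hball
    refine ⟨W, hWo, haW, fun y hy z hz => ?_⟩
    have h1 : |φ y - φ a| < δ / 2 := by
      have := hWsub hy; simpa [Real.dist_eq] using this
    have h2 : |φ z - φ a| < δ / 2 := by
      have := hWsub hz; simpa [Real.dist_eq] using this
    have hrw : φ y - φ z = (φ y - φ a) - (φ z - φ a) := by ring
    rw [hrw]
    exact lt_of_le_of_lt (abs_sub _ _) (by linarith)
  have hFnull : ν Gᶜ = 0 := measure_mono_null hFsub hnull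
  -- open U ⊇ F of small measure
  obtain ⟨U, hFU, hUo, hUsmall⟩ := Set.exists_isOpen_lt_of_lt Gᶜ (ENNReal.ofReal ε')
    (by rw [hFnull]; exact ENNReal.ofReal_pos.2 hε'0)
  obtain ⟨V, hVo, hFV, hVU⟩ := normal_exists_closure_subset hFclosed hUo hFU
  -- Urysohn
  obtain ⟨u, hu0, hu1, huIcc⟩ := exists_continuous_zero_one_of_isClosed
    (hUo.isClosed_compl) isClosed_closure
    (Set.disjoint_left.2 fun a ha hav => ha (hVU hav))
  have hu01 : ∀ a, 0 ≤ u a ∧ u a ≤ 1 := fun a => ⟨(huIcc a).1, (huIcc a).2⟩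
  -- the damped function
  have hosc : ∀ x : K, ∃ W : Set K, IsOpen W ∧ x ∈ W ∧
      ∀ y ∈ W, ∀ z ∈ W, |(φ y * (1 - u y)) - (φ z * (1 - u z))| ≤ 2 * δ := by
    intro x
    by_cases hxV : x ∈ V
    · refine ⟨V, hVo, hxV, fun y hy z hz => ?_⟩
      have h0 : ∀ w ∈ V, φ w * (1 - u w) = 0 := fun w hw => by
        simp [hu1 (subset_closure hw)]
      rw [h0 y hy, h0 z hz, sub_zero, abs_zero]
      positivity
    · have hxG : x ∈ G := by
        by_contra hxG
        exact hxV (hFV hxG)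
      obtain ⟨W₀, hW₀o, hxW₀, hW₀d⟩ := hxG
      obtain ⟨η, hη0, hηkey⟩ : ∃ η : ℝ, 0 < η ∧ η * (2 * (M + 1)) = δ :=
        ⟨δ / (2 * (M + 1)), by positivity, div_mul_cancel₀ _ (by positivity)⟩
      have hW₁o : IsOpen (u ⁻¹' Metric.ball (u x) η) :=
        (Metric.isOpen_ball).preimage u.continuous
      refine ⟨W₀ ∩ u ⁻¹' Metric.ball (u x) η, hW₀o.inter hW₁o,
        ⟨hxW₀, by simp [hη0]⟩, ?_⟩
      rintro y ⟨hy0, hy1⟩ z ⟨hz0, hz1⟩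
      have key : φ y * (1 - u y) - φ z * (1 - u z)
          = (φ y - φ z) * (1 - u z) + φ y * (u z - u y) := by ring
      have h1 : |φ y - φ z| ≤ δ := le_of_lt (hW₀d y hy0 z hz0)
      have h2 : |1 - u z| ≤ 1 := by
        rcases hu01 z with ⟨a1, a2⟩; rw [abs_le]; constructor <;> linarith
      have h3 : |u z - u y| ≤ 2 * η := by
        have hy' : |u y - u x| < η := by simpa [Real.dist_eq] using hy1
        have hz' : |u z - u x| < η := by simpa [Real.dist_eq] using hz1
        have hrw : u z - u y = (u z - u x) - (u y - u x) := by ring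
        rw [hrw]
        exact (abs_sub _ _).trans (by linarith)
      calc |(φ y * (1 - u y)) - (φ z * (1 - u z))|
          ≤ |(φ y - φ z) * (1 - u z)| + |φ y * (u z - u y)| := by
            rw [key]; exact abs_add_le _ _
        _ ≤ δ * 1 + M * (2 * η) := by
            rw [abs_mul, abs_mul]
            exact add_le_add
              (mul_le_mul h1 h2 (abs_nonneg _) (le_of_lt hδ0))
              (mul_le_mul (hM y) h3 (abs_nonneg _) hM0)
        _ ≤ 2 * δ := by nlinarith [mul_nonneg (le_of_lt hη0) hM0]
  obtain ⟨g', hg'cont, hg'⟩ := stmt14_approx_of_osc (fun a => φ a * (1 - u a)) hosc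
  -- the final function
  refine ⟨fun a => g' a + 2 * δ + M * u a,
    by continuity, fun a => ?_, ?_⟩
  · show φ a ≤ g' a + 2 * δ + M * u a
    have h1 : φ a = φ a * (1 - u a) + φ a * u a := by ring
    have h2 : φ a * (1 - u a) ≤ g' a + 2 * δ := by
      have := hg' a; rw [abs_le] at this; linarith [this.1]
    have h3 : φ a * u a ≤ M * u a :=
      mul_le_mul_of_nonneg_right ((le_abs_self _).trans (hM a)) (hu01 a).1
    linarith
  · -- integral bounds
    have hφint : Integrable φ ν :=
      ⟨hφm.aestronglyMeasurable, HasFiniteIntegral.of_bounded (C := M)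
        (ae_of_all _ fun a => by simpa [Real.norm_eq_abs] using hM a)⟩
    have huint : Integrable u ν :=
      ⟨u.continuous.aestronglyMeasurable, HasFiniteIntegral.of_bounded (C := 1)
        (ae_of_all _ fun a => by
          rcases hu01 a with ⟨a1, a2⟩
          rw [Real.norm_eq_abs, abs_le]; exact ⟨by linarith, a2⟩)⟩
    have hφ'bdd : ∀ a, |φ a * (1 - u a)| ≤ M := by
      intro a
      rcases hu01 a with ⟨a1, a2⟩
      rw [abs_mul]
      calc |φ a| * |1 - u a| ≤ M * 1 :=
            mul_le_mul (hM a) (by rw [abs_le]; constructor <;> linarith)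
              (abs_nonneg _) hM0
        _ = M := mul_one M
    have hφ'int : Integrable (fun a => φ a * (1 - u a)) ν :=
      ⟨(hφm.mul ((continuous_const.sub u.continuous).measurable)).aestronglyMeasurable,
        HasFiniteIntegral.of_bounded (C := M)
        (ae_of_all _ fun a => by rw [Real.norm_eq_abs]; exact hφ'bdd a)⟩
    have hg'int : Integrable g' ν :=
      ⟨hg'cont.aestronglyMeasurable, HasFiniteIntegral.of_bounded (C := M + 2 * δ)
        (ae_of_all _ fun a => by
          have h1 := hg' a
          have h2 := hφ'bdd a
          rw [Real.norm_eq_abs]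
          have hrw : g' a = (g' a - φ a * (1 - u a)) + φ a * (1 - u a) := by ring
          rw [hrw]
          exact (abs_add_le _ _).trans (by linarith))⟩
    -- ∫ u ≤ ε'
    have hintu : ∫ a, u a ∂ν ≤ ε' := by
      have hle : ∀ a, u a ≤ Set.indicator U (fun _ => (1:ℝ)) a := by
        intro a
        by_cases haU : a ∈ U
        · rw [Set.indicator_of_mem haU]; exact (hu01 a).2
        · rw [Set.indicator_of_notMem haU]
          have : u a = 0 := hu0 haU
          simp [this]
      calc ∫ a, u a ∂ν ≤ ∫ a, Set.indicator U (fun _ => (1:ℝ)) a ∂ν :=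
            integral_mono huint ((integrable_const (1:ℝ)).indicator hUo.measurableSet) hle
        _ = (ν U).toReal := by rw [integral_indicator_const _ hUo.measurableSet]; simp; rfl
        _ ≤ ε' := ENNReal.toReal_le_of_le_ofReal (le_of_lt hε'0) (le_of_lt hUsmall)
    have hintu0 : 0 ≤ ∫ a, u a ∂ν :=
      integral_nonneg fun a => (hu01 a).1
    have i1 : Integrable (fun a => φ a * (1 - u a) + 2 * δ) ν :=
      hφ'int.add (integrable_const _)
    have i2 : Integrable (fun a => M * u a) ν := huint.const_mul M
    have i3 : Integrable (fun a => φ a + M * u a) ν := hφint.add i2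
    have i4 : Integrable (fun a => g' a + 2 * δ) ν := hg'int.add (integrable_const _)
    have i5 : Integrable (fun a => g' a + 2 * δ + M * u a) ν := i4.add i2
    -- ∫ g' ≤ ∫ φ' + 2δT
    have hint1 : ∫ a, g' a ∂ν ≤ (∫ a, φ a * (1 - u a) ∂ν) + 2 * δ * T := by
      have hstep : ∫ a, g' a ∂ν ≤ ∫ a, (φ a * (1 - u a) + 2 * δ) ∂ν := by
        apply integral_mono hg'int i1
        intro a
        show g' a ≤ φ a * (1 - u a) + 2 * δ
        have := hg' a; rw [abs_le] at this; linarith [this.1]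
      rw [integral_add hφ'int (integrable_const _), integral_const, smul_eq_mul, Measure.real_def, hT] at hstep
      linarith [hstep]
    -- ∫ φ' ≤ ∫ φ + M ε'
    have hint2 : ∫ a, φ a * (1 - u a) ∂ν ≤ (∫ a, φ a ∂ν) + M * ε' := by
      have hstep : ∫ a, φ a * (1 - u a) ∂ν ≤ ∫ a, (φ a + M * u a) ∂ν := by
        apply integral_mono hφ'int i3
        intro a
        show φ a * (1 - u a) ≤ φ a + M * u a
        have habs : -(φ a) ≤ M := by
          have := hM a; rw [abs_le] at this; linarith [this.1]
        have h3 : -(φ a) * u a ≤ M * u a :=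
          mul_le_mul_of_nonneg_right habs (hu01 a).1
        nlinarith [h3]
      rw [integral_add hφint i2, integral_const_mul] at hstep
      have h4 : M * ∫ a, u a ∂ν ≤ M * ε' := mul_le_mul_of_nonneg_left hintu hM0
      linarith
    -- assemble
    have hsplit : ∫ a, (g' a + 2 * δ + M * u a) ∂ν
        = (∫ a, g' a ∂ν) + 2 * δ * T + M * ∫ a, u a ∂ν := by
      rw [integral_add i4 i2, integral_add hg'int (integrable_const _),
        integral_const, integral_const_mul, smul_eq_mul, Measure.real_def, hT]
      ring
    rw [hsplit]
    have hMu : M * ∫ a, u a ∂ν ≤ M * ε' := mul_le_mul_of_nonneg_left hintu hM0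
    have hfinal : 2 * (M * ε') + 4 * δ * T ≤ ε := by
      nlinarith [mul_nonneg (le_of_lt hδ0) hT0, mul_nonneg hM0 (le_of_lt hε'0)]
    linarith

/-- Let `K` be compact Hausdorff, `μ` a finite signed
regular Borel measure with `|μ|(K) = 1`, and `h : K → ℝ` a Borel function of
modulus one with `dμ = h d|μ|`.  If `(x_n)` is uniformly distributed with
respect to `|μ|` and `h` is `|μ|`-Riemann integrable (its discontinuity set
is `|μ|`-null), then with `ε_n = h (x_n)` one has
`(1/N)·∑_{k<N} ε_k f (x_k) → ∫ f dμ` for every continuous `f : K → ℝ`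
(where `∫ f dμ = ∫ f dμ⁺ - ∫ f dμ⁻`). -/
theorem stmt14 {K : Type*} [TopologicalSpace K] [CompactSpace K] [T2Space K]
    [MeasurableSpace K] [BorelSpace K]
    (μ : SignedMeasure K) (hreg : μ.totalVariation.Regular)
    (hnorm : μ.totalVariation Set.univ = 1)
    (h : K → ℝ) (hmeas : Measurable h) (habs : ∀ x, |h x| = 1)
    (hrep : ∀ B : Set K, MeasurableSet B → μ B = ∫ x in B, h x ∂μ.totalVariation)
    (x : ℕ → K)
    (hud : ∀ g : K → ℝ, Continuous g →
      Tendsto (fun N : ℕ => (N : ℝ)⁻¹ * ∑ k ∈ Finset.range N, g (x k))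
        atTop (nhds (∫ a, g a ∂μ.totalVariation)))
    (hRiemann : μ.totalVariation {a | ¬ ContinuousAt h a} = 0) :
    ∀ f : K → ℝ, Continuous f →
      Tendsto (fun N : ℕ => (N : ℝ)⁻¹ * ∑ k ∈ Finset.range N, h (x k) * f (x k))
        atTop
        (nhds ((∫ a, f a ∂μ.toJordanDecomposition.posPart)
          - ∫ a, f a ∂μ.toJordanDecomposition.negPart)) := by
  intro f hf
  set ν : Measure K := μ.totalVariation with hν
  haveI : IsFiniteMeasure ν := ⟨by rw [hnorm]; exact ENNReal.one_lt_top⟩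
  haveI : ν.OuterRegular := hreg.toOuterRegular
  -- bound for f
  obtain ⟨M, hM0, hMf⟩ : ∃ M : ℝ, 0 ≤ M ∧ ∀ a, |f a| ≤ M := by
    refine ⟨‖BoundedContinuousFunction.mkOfCompact ⟨f, hf⟩‖, norm_nonneg _, fun a => ?_⟩
    have := BoundedContinuousFunction.norm_coe_le_norm
      (BoundedContinuousFunction.mkOfCompact ⟨f, hf⟩) a
    simpa [Real.norm_eq_abs] using this
  set φ : K → ℝ := fun a => h a * f a with hφ
  have hφm : Measurable φ := hmeas.mul hf.measurable
  have hφbdd : ∀ a, |φ a| ≤ M := fun a => by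
    rw [hφ]; simp only []
    rw [abs_mul, habs a, one_mul]; exact hMf a
  have hφnull : ν {a | ¬ ContinuousAt φ a} = 0 := by
    refine measure_mono_null (fun a ha => ?_) hRiemann
    simp only [Set.mem_setOf_eq] at ha ⊢
    intro hc
    exact ha (hc.mul hf.continuousAt)
  have hφint : Integrable φ ν :=
    ⟨hφm.aestronglyMeasurable, HasFiniteIntegral.of_bounded (C := M)
      (ae_of_all _ fun a => by simpa [Real.norm_eq_abs] using hφbdd a)⟩
  -- Step 1: uniform distribution extends to φ
  have hmain : Tendsto (fun N : ℕ => (N : ℝ)⁻¹ * ∑ k ∈ Finset.range N, φ (x k))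
      atTop (nhds (∫ a, φ a ∂ν)) := by
    rw [Metric.tendsto_atTop]
    intro ε hε
    obtain ⟨gu, hguc, hgu_ge, hgu_int⟩ := stmt14_exists_cont_ge ν φ hφm hM0 hφbdd hφnull
      (half_pos hε)
    have hnegnull : ν {a | ¬ ContinuousAt (fun b => -φ b) a} = 0 := by
      refine measure_mono_null (fun a ha => ?_) hφnull
      simp only [Set.mem_setOf_eq] at ha ⊢
      intro hc; exact ha hc.neg
    obtain ⟨gl, hglc, hgl_ge, hgl_int⟩ := stmt14_exists_cont_ge ν (fun b => -φ b)
      hφm.neg hM0 (fun a => by rw [abs_neg]; exact hφbdd a) hnegnull (half_pos hε)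
    rw [integral_neg] at hgl_int
    have hLle : ∀ N : ℕ, (N : ℝ)⁻¹ * ∑ k ∈ Finset.range N, φ (x k)
        ≤ (N : ℝ)⁻¹ * ∑ k ∈ Finset.range N, gu (x k) := by
      intro N
      apply mul_le_mul_of_nonneg_left _ (by positivity)
      exact Finset.sum_le_sum fun k _ => hgu_ge (x k)
    have hLge : ∀ N : ℕ, -((N : ℝ)⁻¹ * ∑ k ∈ Finset.range N, gl (x k))
        ≤ (N : ℝ)⁻¹ * ∑ k ∈ Finset.range N, φ (x k) := by
      intro N
      rw [← mul_neg, ← Finset.sum_neg_distrib]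
      apply mul_le_mul_of_nonneg_left _ (by positivity)
      apply Finset.sum_le_sum
      intro k _
      have := hgl_ge (x k)
      linarith
    have hev1 : ∀ᶠ N : ℕ in atTop, (N : ℝ)⁻¹ * ∑ k ∈ Finset.range N, gu (x k)
        < (∫ a, φ a ∂ν) + ε :=
      (hud gu hguc).eventually_lt_const
        (show (∫ a, gu a ∂ν) < (∫ a, φ a ∂ν) + ε by linarith)
    have hev2 : ∀ᶠ N : ℕ in atTop, (N : ℝ)⁻¹ * ∑ k ∈ Finset.range N, gl (x k)
        < -(∫ a, φ a ∂ν) + ε :=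
      (hud gl hglc).eventually_lt_const
        (show (∫ a, gl a ∂ν) < -(∫ a, φ a ∂ν) + ε by linarith)
    rw [eventually_atTop] at hev1 hev2
    obtain ⟨N1, hN1⟩ := hev1
    obtain ⟨N2, hN2⟩ := hev2
    refine ⟨max N1 N2, fun n hn => ?_⟩
    have e1 := hN1 n (le_trans (le_max_left _ _) hn)
    have e2 := hN2 n (le_trans (le_max_right _ _) hn)
    have b1 := hLle n
    have b2 := hLge n
    rw [Real.dist_eq, abs_sub_lt_iff]
    constructor <;> linarith
  -- Step 2: identification of the limit
  set P : Set K := h ⁻¹' {1} with hP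
  have hPm : MeasurableSet P := hmeas (measurableSet_singleton 1)
  have hPo : ∀ a ∈ P, h a = 1 := fun a ha => ha
  have hPc : ∀ a ∉ P, h a = -1 := by
    intro a ha
    rcases (abs_eq (by norm_num : (0:ℝ) ≤ 1)).1 (habs a) with h1 | h2
    · exact absurd h1 ha
    · exact h2
  have hhint : Integrable h ν :=
    ⟨hmeas.aestronglyMeasurable, HasFiniteIntegral.of_bounded (C := 1)
      (ae_of_all _ fun a => by rw [Real.norm_eq_abs, habs a])⟩
  -- the Jordan decomposition of μ
  set J : JordanDecomposition K :=
    ⟨ν.restrict P, ν.restrict Pᶜ, by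
      refine ⟨Pᶜ, hPm.compl, ?_, ?_⟩
      · rw [Measure.restrict_apply hPm.compl, Set.compl_inter_self]
        exact measure_empty
      · rw [compl_compl, Measure.restrict_apply hPm, Set.inter_compl_self]
        exact measure_empty⟩ with hJ
  have hJeq : J.toSignedMeasure = μ := by
    apply VectorMeasure.ext
    intro B hB
    rw [JordanDecomposition.toSignedMeasure, VectorMeasure.sub_apply,
      Measure.toSignedMeasure_apply_measurable hB,
      Measure.toSignedMeasure_apply_measurable hB, hrep B hB]
    show (ν.restrict P B).toReal - (ν.restrict Pᶜ B).toReal = _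
    rw [Measure.restrict_apply hB, Measure.restrict_apply hB]
    have hint' : Integrable h (ν.restrict B) := hhint.restrict
    have hsplit := integral_add_compl hPm hint' (μ := ν.restrict B)
    rw [Measure.restrict_restrict hPm, Measure.restrict_restrict hPm.compl] at hsplit
    have e1 : ∫ a in P ∩ B, h a ∂ν = (ν (P ∩ B)).toReal := by
      rw [setIntegral_congr_fun (hPm.inter hB) (fun a ha => hPo a ha.1)]
      simp [Measure.restrict_apply_univ]; rfl
    have e2 : ∫ a in Pᶜ ∩ B, h a ∂ν = -(ν (Pᶜ ∩ B)).toReal := by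
      rw [setIntegral_congr_fun (hPm.compl.inter hB) (fun a ha => hPc a ha.1)]
      simp; rfl
    rw [e1, e2] at hsplit
    rw [← hsplit, Set.inter_comm B P, Set.inter_comm B Pᶜ]
    ring
  have hJD : μ.toJordanDecomposition = J := by
    apply JordanDecomposition.toSignedMeasure_injective
    rw [hJeq, SignedMeasure.toSignedMeasure_toJordanDecomposition]
  have hident : (∫ a, f a ∂μ.toJordanDecomposition.posPart)
      - ∫ a, f a ∂μ.toJordanDecomposition.negPart = ∫ a, φ a ∂ν := by
    rw [hJD]
    show (∫ a, f a ∂ν.restrict P) - ∫ a, f a ∂ν.restrict Pᶜ = _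
    have hsplit := integral_add_compl hPm hφint (μ := ν)
    have e1 : ∫ a in P, φ a ∂ν = ∫ a in P, f a ∂ν := by
      apply setIntegral_congr_fun hPm
      intro a ha
      show h a * f a = f a
      rw [hPo a ha, one_mul]
    have e2 : ∫ a in Pᶜ, φ a ∂ν = -∫ a in Pᶜ, f a ∂ν := by
      rw [← integral_neg]
      apply setIntegral_congr_fun hPm.compl
      intro a ha
      show h a * f a = -f a
      rw [hPc a ha]; ring
    rw [e1, e2] at hsplit
    rw [← hsplit]
    ring
  rw [hident]
  exact hmain
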